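/- arXiv:1904.00729 — 5 statements merged into one kernel-verified Lean document; each statement's English description precedes it below -/
import Mathlib

section
/- Let G(Γ) be the plumbing group of a plumbing graph Γ and suppose the set of arrowheads H is nonempty. Fix an arrowhead h₀ ∈ H. Then the relation (R2) for h₀, namely [γ_{h₀}, γ_{v_{h₀}}] = 1, is a consequence of the remaining relations: the canonical surjection from the group presented by the same generators and by all relations (R1), (R3), (R4) together with the relations (R2) for all h ≠ h₀, onto G(Γ), is an isomorphism. -/
open scoped BigOperators
open scoped commutatorElement

/-- A plumbing graph: a finite connected loopless multigraph with vertex set `V`,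
arrowheads `H` (each attached to a single vertex), edges `E` between vertices
(oriented so that `src e < tgt e` in the fixed linear order on `V`), Euler numbers,
genera, and a fixed maximal (spanning) tree, together with fixed linear orders on
`V`, `H` and `E` used to order the products in the relations. -/
structure PlumbingGraph where
  V : Type
  H : Type
  E : Type
  [fintypeV : Fintype V]
  [fintypeH : Fintype H]
  [fintypeE : Fintype E]
  [linOrdV : LinearOrder V]
  [linOrdH : LinearOrder H]
  [linOrdE : LinearOrder E]
  nonemptyV : Nonempty V
  src : E → V
  tgt : E → V
  /-- no loops; each edge is oriented from its smaller endpoint to its larger one -/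
  src_lt_tgt : ∀ e, src e < tgt e
  /-- the vertex attached to an arrowhead -/
  vh : H → V
  /-- Euler numbers -/
  euler : V → ℤ
  /-- genera -/
  genus : V → ℕ
  /-- the fixed maximal tree -/
  tree : Finset E
  /-- the tree is spanning: any two vertices are joined by a path of tree edges -/
  tree_spanning : ∀ v w : V, Relation.ReflTransGen
    (fun x y => ∃ e ∈ tree, (src e = x ∧ tgt e = y) ∨ (src e = y ∧ tgt e = x)) v w
  /-- the tree has `|V| - 1` edges (hence is a tree) -/
  tree_card : tree.card + 1 = Fintype.card V
  /-- tree edges are minimal in each `E_{v,w}` -/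
  tree_min : ∀ e ∈ tree, ∀ e' : E, src e = src e' → tgt e = tgt e' → e ≤ e'

attribute [instance] PlumbingGraph.fintypeV PlumbingGraph.fintypeH PlumbingGraph.fintypeE
  PlumbingGraph.linOrdV PlumbingGraph.linOrdH PlumbingGraph.linOrdE

/-- Generators of the plumbing group: `γ_v` (`vert`), `γ_h` (`arrow`),
`γ_e` for `e ∈ E*` (`edge`), and `α_{j,v}`, `β_{j,v}` (`hA`, `hB`). -/
inductive PlumbingGraph.Gen (Γ : PlumbingGraph) : Type
  | vert : Γ.V → Γ.Gen
  | arrow : Γ.H → Γ.Gen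
  | edge : (e : Γ.E) → e ∉ Γ.tree → Γ.Gen
  | hA : (v : Γ.V) → Fin (Γ.genus v) → Γ.Gen
  | hB : (v : Γ.V) → Fin (Γ.genus v) → Γ.Gen

namespace PlumbingGraph

variable (Γ : PlumbingGraph)

/-- `γ_ê`: trivial on tree edges, `γ_e` when read from the smaller endpoint `v`,
`γ_e⁻¹` when read from the larger endpoint. -/
def gammaHat (v : Γ.V) (e : Γ.E) : FreeGroup Γ.Gen :=
  if h : e ∈ Γ.tree then 1
  else if Γ.src e = v then FreeGroup.of (Gen.edge e h)
  else (FreeGroup.of (Gen.edge e h))⁻¹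

/-- the endpoint of `e` other than `v` (for `e` incident to `v`) -/
def otherEnd (v : Γ.V) (e : Γ.E) : Γ.V :=
  if Γ.src e = v then Γ.tgt e else Γ.src e

/-- `E_v`: the set of edges at `v` -/
def edgesAt (v : Γ.V) : Finset Γ.E :=
  Finset.univ.filter fun e => Γ.src e = v ∨ Γ.tgt e = v

/-- `H_v`: the set of arrowheads at `v` -/
def arrowsAt (v : Γ.V) : Finset Γ.H :=
  Finset.univ.filter fun h => Γ.vh h = v

/-- the ordered product `Π_{e ∈ E_v} γ_ê γ_{v₂(e)} γ_ê⁻¹` -/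
def edgeProd (v : Γ.V) : FreeGroup Γ.Gen :=
  (((Γ.edgesAt v).sort (· ≤ ·)).map fun e =>
    Γ.gammaHat v e * FreeGroup.of (Gen.vert (Γ.otherEnd v e)) * (Γ.gammaHat v e)⁻¹).prod

/-- the ordered product `Π_{h ∈ H_v} γ_h` -/
def arrowProd (v : Γ.V) : FreeGroup Γ.Gen :=
  (((Γ.arrowsAt v).sort (· ≤ ·)).map fun h => FreeGroup.of (Gen.arrow h)).prod

/-- the product of commutators `Π_j [α_{j,v}, β_{j,v}]` -/
def genusProd (v : Γ.V) : FreeGroup Γ.Gen :=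
  ((List.finRange (Γ.genus v)).map fun j =>
    ⁅FreeGroup.of (Gen.hA v j), FreeGroup.of (Gen.hB v j)⁆).prod

/-- the relator (R1) at a vertex `v` -/
def relR1 (v : Γ.V) : FreeGroup Γ.Gen :=
  Γ.edgeProd v * Γ.arrowProd v * (FreeGroup.of (Gen.vert v)) ^ (Γ.euler v) *
    (Γ.genusProd v)⁻¹

/-- the relator (R2) at an arrowhead `h` -/
def relR2 (h : Γ.H) : FreeGroup Γ.Gen :=
  ⁅FreeGroup.of (Gen.arrow h), FreeGroup.of (Gen.vert (Γ.vh h))⁆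

/-- the relator (R3) at an edge `e ∈ E*` -/
def relR3 (e : Γ.E) (he : e ∉ Γ.tree) : FreeGroup Γ.Gen :=
  ⁅FreeGroup.of (Gen.vert (Γ.src e)),
    FreeGroup.of (Gen.edge e he) * FreeGroup.of (Gen.vert (Γ.tgt e)) *
      (FreeGroup.of (Gen.edge e he))⁻¹⁆

/-- the set of relators (R1)–(R4) -/
def rels : Set (FreeGroup Γ.Gen) :=
  (Set.range fun v => Γ.relR1 v) ∪ (Set.range fun h => Γ.relR2 h) ∪
    {w | ∃ (e : Γ.E) (he : e ∉ Γ.tree), w = Γ.relR3 e he} ∪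
    {w | ∃ (v : Γ.V) (j : Fin (Γ.genus v)),
      w = ⁅FreeGroup.of (Gen.vert v), FreeGroup.of (Gen.hA v j)⁆ ∨
      w = ⁅FreeGroup.of (Gen.vert v), FreeGroup.of (Gen.hB v j)⁆}

/-- the plumbing group `G(Γ)` -/
abbrev Grp : Type := PresentedGroup Γ.rels

/-- the incidence matrix `A` -/
def incidence : Matrix Γ.V Γ.V ℤ := Matrix.of fun v w =>
  if v = w then Γ.euler v
  else ((Finset.univ.filter fun e : Γ.E =>
    (Γ.src e = v ∧ Γ.tgt e = w) ∨ (Γ.src e = w ∧ Γ.tgt e = v)).card : ℤ)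

/-- `A` is negative definite -/
def NegDefinite : Prop :=
  ∀ x : Γ.V → ℝ, x ≠ 0 → ∑ v : Γ.V, ∑ w : Γ.V, x v * (Γ.incidence v w : ℝ) * x w < 0

/-- `r`: the number of arrowheads -/
def r : ℕ := Fintype.card Γ.H

/-- `b₁(Γ)`: the number of edges outside the maximal tree -/
def b1 : ℕ := (Finset.univ.filter fun e : Γ.E => e ∉ Γ.tree).card

end PlumbingGraph

/-- the one-dimensional representation `ℂ_ξ` attached to a character `ξ : G → ℂ*` -/
noncomputable def charRep {G : Type} [Group G] (ξ : G →* ℂˣ) : Rep ℂ G :=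
  Rep.of
    { toFun := fun g => (ξ g : ℂ) • (LinearMap.id : ℂ →ₗ[ℂ] ℂ)
      map_one' := by simp [Module.End.one_eq_id]
      map_mul' := fun g h => by
        ext
        simp [mul_smul, Module.End.mul_apply, mul_comm] }

/-- `dim_ℂ H¹(G; ℂ_ξ)` -/
noncomputable def h1dim {G : Type} [Group G] (ξ : G →* ℂˣ) : ℕ :=
  Module.finrank ℂ (groupCohomology (charRep ξ) 1)

namespace PlumbingGraph

/-- the relators (R1), (R3), (R4) together with (R2) for all `h ≠ h₀` -/
def relsMinus (Γ : PlumbingGraph) (h₀ : Γ.H) : Set (FreeGroup Γ.Gen) :=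
  (Set.range fun v => Γ.relR1 v) ∪ {w | ∃ h : Γ.H, h ≠ h₀ ∧ w = Γ.relR2 h} ∪
    {w | ∃ (e : Γ.E) (he : e ∉ Γ.tree), w = Γ.relR3 e he} ∪
    {w | ∃ (v : Γ.V) (j : Fin (Γ.genus v)),
      w = ⁅FreeGroup.of (Gen.vert v), FreeGroup.of (Gen.hA v j)⁆ ∨
      w = ⁅FreeGroup.of (Gen.vert v), FreeGroup.of (Gen.hB v j)⁆}

section GenericCommute

private lemma commute_conj_swap {Q : Type*} [Group Q] {a b g : Q}
    (h : Commute a (g * b * g⁻¹)) : Commute b (g⁻¹ * a * g) := by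
  have h' : a * (g * b * g⁻¹) = g * b * g⁻¹ * a := h
  show b * (g⁻¹ * a * g) = (g⁻¹ * a * g) * b
  calc b * (g⁻¹ * a * g) = g⁻¹ * (g * b * g⁻¹ * a) * g := by group
    _ = g⁻¹ * (a * (g * b * g⁻¹)) * g := by rw [h']
    _ = (g⁻¹ * a * g) * b := by group

private lemma commute_extract {Q : Type*} [Group Q] {x a : Q} {l : List Q}
    (hl : ∃ l₁ l₂ : List Q, l = l₁ ++ a :: l₂ ∧ (∀ b ∈ l₁, Commute x b) ∧
      (∀ b ∈ l₂, Commute x b))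
    (h : Commute x l.prod) : Commute x a := by
  obtain ⟨l₁, l₂, rfl, h1, h2⟩ := hl
  rw [List.prod_append, List.prod_cons] at h
  have c1 : Commute x l₁.prod := Commute.list_prod_right _ _ h1
  have c2 : Commute x l₂.prod := Commute.list_prod_right _ _ h2
  have ha : a = l₁.prod⁻¹ * (l₁.prod * (a * l₂.prod)) * l₂.prod⁻¹ := by group
  rw [ha]
  exact (c1.inv_right.mul_right h).mul_right c2.inv_right

end GenericCommute

section GraphAux2
open SimpleGraph




variable {V : Type} [Fintype V]

private lemma reachable_of_adj_reachable {G H : SimpleGraph V}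
    (h : ∀ a b, G.Adj a b → H.Reachable a b) {u v : V} (huv : G.Reachable u v) :
    H.Reachable u v := by
  obtain ⟨p⟩ := huv
  induction p with
  | nil => exact Reachable.refl _
  | cons ha _ ih => exact (h _ _ ha).trans ih

private lemma connected_card_le :
    ∀ (k : ℕ) (G : SimpleGraph V), G.Connected → G.edgeSet.ncard = k →
      Fintype.card V ≤ k + 1 := by
  intro k
  induction k using Nat.strong_induction_on with
  | _ k IH =>
  intro G hG hk
  classical
  by_cases hac : G.IsAcyclic
  · have hT : G.IsTree := ⟨hG, hac⟩
    letI : Fintype G.edgeSet := Fintype.ofFinite _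
    have h1 := hT.card_edgeFinset
    have h2 : G.edgeSet.ncard = G.edgeFinset.card := Set.ncard_eq_toFinset_card' _
    omega
  · simp only [IsAcyclic] at hac
    push_neg at hac
    obtain ⟨u, c, hc⟩ := hac
    cases c with
    | nil => exact absurd hc (by simp [Walk.IsCycle])
    | cons ha q =>
      rename_i z
      have hcyc := hc
      have hmem : s(u, z) ∈ (Walk.cons ha q).edges := by simp
      have hreach : (G \ fromEdgeSet {s(u, z)}).Reachable u z :=
        (adj_and_reachable_delete_edges_iff_exists_cycle.mpr ⟨u, _, hcyc, hmem⟩).2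
      set G' := G \ fromEdgeSet {s(u, z)} with hG'
      have hadj' : ∀ a b, G.Adj a b → G'.Reachable a b := by
        intro a b hab
        by_cases he : s(a, b) = s(u, z)
        · rw [Sym2.eq, Sym2.rel_iff'] at he
          rcases he with ⟨rfl, rfl⟩ | ⟨rfl, rfl⟩
          · exact hreach
          · exact hreach.symm
        · exact Adj.reachable (by simp [hG', hab, he, hab.ne])
      have hG'conn : G'.Connected := by
        haveI : Nonempty V := hG.nonempty
        exact Connected.mk (fun a b => reachable_of_adj_reachable hadj' (hG.preconnected a b))
      have hes : G'.edgeSet = G.edgeSet \ {s(u, z)} := by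
        simp [hG', edgeSet_sdiff, edgeSet_fromEdgeSet, edgeSet_sdiff_sdiff_isDiag]
      have hmemE : s(u, z) ∈ G.edgeSet := ha
      have hfin : G.edgeSet.Finite := Set.toFinite _
      have hk1 : 1 ≤ k := by
        rw [← hk]
        have := (Set.ncard_pos hfin).mpr ⟨_, hmemE⟩
        omega
      have hcard' : G'.edgeSet.ncard = k - 1 := by
        rw [hes, Set.ncard_diff_singleton_of_mem hmemE, hk]
      have := IH (k - 1) (by omega) G' hG'conn hcard'
      omega

private lemma isTree_of_card {G : SimpleGraph V} (hG : G.Connected)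
    (hk : G.edgeSet.ncard + 1 = Fintype.card V) : G.IsTree := by
  classical
  refine ⟨hG, ?_⟩
  by_contra hac
  simp only [IsAcyclic] at hac
  push_neg at hac
  obtain ⟨u, c, hc⟩ := hac
  cases c with
  | nil => exact absurd hc (by simp [Walk.IsCycle])
  | cons ha q =>
    rename_i z
    have hmem : s(u, z) ∈ (Walk.cons ha q).edges := by simp
    have hreach : (G \ fromEdgeSet {s(u, z)}).Reachable u z :=
      (adj_and_reachable_delete_edges_iff_exists_cycle.mpr ⟨u, _, hc, hmem⟩).2
    set G' := G \ fromEdgeSet {s(u, z)} with hG'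
    have hadj' : ∀ a b, G.Adj a b → G'.Reachable a b := by
      intro a b hab
      by_cases he : s(a, b) = s(u, z)
      · rw [Sym2.eq, Sym2.rel_iff'] at he
        rcases he with ⟨rfl, rfl⟩ | ⟨rfl, rfl⟩
        · exact hreach
        · exact hreach.symm
      · exact Adj.reachable (by simp [hG', hab, he, hab.ne])
    have hG'conn : G'.Connected := by
      haveI : Nonempty V := hG.nonempty
      exact Connected.mk (fun a b => reachable_of_adj_reachable hadj' (hG.preconnected a b))
    have hes : G'.edgeSet = G.edgeSet \ {s(u, z)} := by
      simp [hG', edgeSet_sdiff, edgeSet_fromEdgeSet, edgeSet_sdiff_sdiff_isDiag]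
    have hmemE : s(u, z) ∈ G.edgeSet := ha
    have hfin : G.edgeSet.Finite := Set.toFinite _
    have hk1 : 0 < G.edgeSet.ncard := (Set.ncard_pos hfin).mpr ⟨_, hmemE⟩
    have hcard' : G'.edgeSet.ncard = G.edgeSet.ncard - 1 := by
      rw [hes, Set.ncard_diff_singleton_of_mem hmemE]
    have := connected_card_le (G.edgeSet.ncard - 1) G' hG'conn hcard'
    omega

end GraphAux2

section TreeAux2
open SimpleGraph


set_option linter.unusedSectionVars false

variable {V : Type} [Fintype V] [DecidableEq V] {G : SimpleGraph V}

noncomputable def treePath (hT : G.IsTree) (v₀ w : V) : G.Walk w v₀ :=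
  (hT.existsUnique_path w v₀).exists.choose

lemma treePath_isPath (hT : G.IsTree) (v₀ w : V) : (treePath hT v₀ w).IsPath :=
  (hT.existsUnique_path w v₀).exists.choose_spec

lemma treePath_unique (hT : G.IsTree) {v₀ w : V} (p : G.Walk w v₀) (hp : p.IsPath) :
    p = treePath hT v₀ w :=
  (hT.existsUnique_path w v₀).unique hp (treePath_isPath hT v₀ w)

lemma treePath_root (hT : G.IsTree) (v₀ : V) : (treePath hT v₀ v₀).length = 0 := by
  have := treePath_unique hT (Walk.nil : G.Walk v₀ v₀) Walk.IsPath.nil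
  rw [← this]
  rfl

lemma treePath_pos (hT : G.IsTree) {v₀ x : V} (hx : x ≠ v₀) :
    0 < (treePath hT v₀ x).length := by
  rcases Nat.eq_zero_or_pos (treePath hT v₀ x).length with h | h
  · exact absurd (Walk.eq_of_length_eq_zero h) hx
  · exact h

lemma treePath_not_mem_support (hT : G.IsTree) {v₀ u w : V}
    (h : (treePath hT v₀ w).length < (treePath hT v₀ u).length) :
    u ∉ (treePath hT v₀ w).support := by
  intro hmem
  have hd : (((treePath hT v₀ w)).dropUntil u hmem).IsPath :=
    (treePath_isPath hT v₀ w).dropUntil hmem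
  have heq := treePath_unique hT _ hd
  have hlen : ((treePath hT v₀ w).dropUntil u hmem).length ≤ (treePath hT v₀ w).length :=
    Walk.length_dropUntil_le _ hmem
  rw [heq] at hlen
  omega

lemma treePath_cons_eq (hT : G.IsTree) {v₀ u w : V} (hadj : G.Adj u w)
    (hlt : (treePath hT v₀ w).length < (treePath hT v₀ u).length) :
    treePath hT v₀ u = Walk.cons hadj (treePath hT v₀ w) :=
  (treePath_unique hT _ ((treePath_isPath hT v₀ w).cons
    (treePath_not_mem_support hT hlt))).symm

lemma treePath_neighbor_far (hT : G.IsTree) {v₀ u w x : V} (hadj : G.Adj u w)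
    (hlt : (treePath hT v₀ w).length < (treePath hT v₀ u).length)
    (hx : G.Adj u x) (hxw : x ≠ w) :
    (treePath hT v₀ u).length < (treePath hT v₀ x).length := by
  by_contra hle
  push_neg at hle
  have hcons := treePath_cons_eq hT hadj hlt
  have hLu : (treePath hT v₀ u).length = (treePath hT v₀ w).length + 1 := by
    rw [hcons]; rfl
  by_cases hmem : u ∈ (treePath hT v₀ x).support
  · have htake : ((treePath hT v₀ x).takeUntil u hmem).length
        + ((treePath hT v₀ x).dropUntil u hmem).length = (treePath hT v₀ x).length := by
      have := congrArg Walk.length ((treePath hT v₀ x).take_spec hmem)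
      rwa [Walk.length_append] at this
    have hdp : ((treePath hT v₀ x).dropUntil u hmem).IsPath :=
      (treePath_isPath hT v₀ x).dropUntil hmem
    have heq := treePath_unique hT _ hdp
    have hdl : ((treePath hT v₀ x).dropUntil u hmem).length = (treePath hT v₀ u).length := by
      rw [heq]
    have htpos : 0 < ((treePath hT v₀ x).takeUntil u hmem).length := by
      rcases Nat.eq_zero_or_pos ((treePath hT v₀ x).takeUntil u hmem).length with h0 | h0
      · exact absurd (Walk.eq_of_length_eq_zero h0) hx.ne'
      · exact h0
    omega
  · have heq := (treePath_unique hT (Walk.cons hx (treePath hT v₀ x)) ((treePath_isPath hT v₀ x).cons hmem)).symm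
    rw [hcons] at heq
    have hsup := congrArg Walk.support heq
    rw [Walk.support_cons, Walk.support_cons] at hsup
    have h1 : (treePath hT v₀ w).support = (treePath hT v₀ x).support :=
      List.cons_injective hsup
    rw [Walk.support_eq_cons (treePath hT v₀ w), Walk.support_eq_cons (treePath hT v₀ x)] at h1
    simp only [List.cons.injEq] at h1
    exact hxw h1.1.symm

end TreeAux2

section RedundantAux

open SimpleGraph

set_option linter.unusedSectionVars false

variable (Γ : PlumbingGraph)

/-- the simple graph underlying the maximal tree -/
def TG : SimpleGraph Γ.V where
  Adj u w := ∃ e ∈ Γ.tree, (Γ.src e = u ∧ Γ.tgt e = w) ∨ (Γ.src e = w ∧ Γ.tgt e = u)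
  symm := ⟨by rintro u w ⟨e, he, h⟩; exact ⟨e, he, h.symm⟩⟩
  loopless := ⟨by
    rintro v ⟨e, he, ⟨h1, h2⟩ | ⟨h1, h2⟩⟩ <;>
      exact absurd (h1.trans h2.symm) (Γ.src_lt_tgt e).ne⟩

lemma tree_edge_unique {e e' : Γ.E} (he : e ∈ Γ.tree) (he' : e' ∈ Γ.tree)
    (h1 : Γ.src e = Γ.src e') (h2 : Γ.tgt e = Γ.tgt e') : e = e' :=
  le_antisymm (Γ.tree_min e he e' h1 h2) (Γ.tree_min e' he' e h1.symm h2.symm)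

lemma TG_isTree : (Γ.TG).IsTree := by
  apply isTree_of_card
  · haveI : Nonempty Γ.V := Γ.nonemptyV
    refine SimpleGraph.Connected.mk (fun u w => ?_)
    rw [SimpleGraph.reachable_iff_reflTransGen]
    exact Γ.tree_spanning u w
  · have himg : (Γ.TG).edgeSet = (fun e => s(Γ.src e, Γ.tgt e)) '' ↑Γ.tree := by
      ext x
      induction x using Sym2.ind with
      | _ a b =>
        simp only [mem_edgeSet, Set.mem_image, Finset.mem_coe]
        constructor
        · rintro ⟨e, he, ⟨h1, h2⟩ | ⟨h1, h2⟩⟩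
          · exact ⟨e, he, by rw [h1, h2]⟩
          · exact ⟨e, he, by rw [h1, h2]; exact Sym2.eq_swap⟩
        · rintro ⟨e, he, hxe⟩
          rw [Sym2.eq_iff] at hxe
          exact ⟨e, he, hxe⟩
    have hinj : Set.InjOn (fun e => s(Γ.src e, Γ.tgt e)) ↑Γ.tree := by
      intro e he e' he' hee'
      simp only [Sym2.eq_iff] at hee'
      rcases hee' with ⟨h1, h2⟩ | ⟨h1, h2⟩
      · exact Γ.tree_edge_unique he he' h1 h2
      · exfalso
        have hcyc : Γ.src e' < Γ.src e' := by
          calc Γ.src e' < Γ.tgt e' := Γ.src_lt_tgt e'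
            _ = Γ.src e := h1.symm
            _ < Γ.tgt e := Γ.src_lt_tgt e
            _ = Γ.src e' := h2
        exact absurd hcyc (lt_irrefl _)
    rw [himg, Set.ncard_image_of_injOn hinj, Set.ncard_coe_finset]
    exact Γ.tree_card

lemma mem_edgesAt {v : Γ.V} {e : Γ.E} : e ∈ Γ.edgesAt v ↔ Γ.src e = v ∨ Γ.tgt e = v := by
  simp [edgesAt]

lemma adj_otherEnd {u : Γ.V} {b : Γ.E} (hbt : b ∈ Γ.tree) (hb : b ∈ Γ.edgesAt u) :
    (Γ.TG).Adj u (Γ.otherEnd u b) ∧ Γ.otherEnd u b ≠ u := by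
  rcases (Γ.mem_edgesAt).mp hb with hs | ht
  · rw [otherEnd, if_pos hs]
    refine ⟨⟨b, hbt, Or.inl ⟨hs, rfl⟩⟩, ?_⟩
    intro hc
    exact absurd (hs.trans hc.symm).symm (Γ.src_lt_tgt b).ne'
  · by_cases hs : Γ.src b = u
    · rw [otherEnd, if_pos hs]
      refine ⟨⟨b, hbt, Or.inl ⟨hs, rfl⟩⟩, ?_⟩
      intro hc
      exact absurd (hs.trans hc.symm).symm (Γ.src_lt_tgt b).ne'
    · rw [otherEnd, if_neg hs]
      refine ⟨⟨b, hbt, Or.inr ⟨rfl, ht⟩⟩, ?_⟩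
      intro hc
      exact absurd (hc.trans ht.symm) (Γ.src_lt_tgt b).ne

lemma tree_edge_eq_of_otherEnd {u : Γ.V} {b e : Γ.E} (hbt : b ∈ Γ.tree) (het : e ∈ Γ.tree)
    (hb : b ∈ Γ.edgesAt u) (he : e ∈ Γ.edgesAt u)
    (hoe : Γ.otherEnd u b = Γ.otherEnd u e) : b = e := by
  have endpts : ∀ c : Γ.E, c ∈ Γ.edgesAt u →
      (Γ.src c = u ∧ Γ.tgt c = Γ.otherEnd u c) ∨
      (Γ.src c = Γ.otherEnd u c ∧ Γ.tgt c = u) := by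
    intro c hc
    rcases (Γ.mem_edgesAt).mp hc with hs | ht
    · left; exact ⟨hs, by rw [otherEnd, if_pos hs]⟩
    · by_cases hs : Γ.src c = u
      · left; exact ⟨hs, by rw [otherEnd, if_pos hs]⟩
      · right; exact ⟨by rw [otherEnd, if_neg hs], ht⟩
    
  rcases endpts b hb with ⟨hb1, hb2⟩ | ⟨hb1, hb2⟩ <;>
    rcases endpts e he with ⟨he1, he2⟩ | ⟨he1, he2⟩
  · exact Γ.tree_edge_unique hbt het (hb1.trans he1.symm) (hb2.trans (hoe ▸ he2).symm)
  · exfalso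
    have l1 := Γ.src_lt_tgt b
    have l2 := Γ.src_lt_tgt e
    rw [hb1, hb2, hoe] at l1
    rw [he1, he2] at l2
    exact absurd (l1.trans l2) (lt_irrefl _)
  · exfalso
    have l1 := Γ.src_lt_tgt b
    have l2 := Γ.src_lt_tgt e
    rw [hb1, hb2] at l1
    rw [he1, he2, ← hoe] at l2
    exact absurd (l1.trans l2) (lt_irrefl _)
  · exact Γ.tree_edge_unique hbt het (hb1.trans (hoe ▸ he1).symm) (hb2.trans he2.symm)

end RedundantAux

section RedundantGroup

set_option linter.unusedSectionVars false

open SimpleGraph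

variable (Γ : PlumbingGraph) (h₀ : Γ.H)

/-- the quotient map to the reduced presented group -/
noncomputable def qh : FreeGroup Γ.Gen →* PresentedGroup (Γ.relsMinus h₀) :=
  PresentedGroup.mk _

/-- image of a vertex generator -/
noncomputable def qv (v : Γ.V) : PresentedGroup (Γ.relsMinus h₀) :=
  qh Γ h₀ (FreeGroup.of (Gen.vert v))

lemma q_rel {r : FreeGroup Γ.Gen} (hr : r ∈ Γ.relsMinus h₀) : qh Γ h₀ r = 1 :=
  (QuotientGroup.eq_one_iff r).mpr (Subgroup.subset_normalClosure hr)

lemma memR1 (v : Γ.V) : Γ.relR1 v ∈ Γ.relsMinus h₀ :=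
  Or.inl (Or.inl (Or.inl ⟨v, rfl⟩))

lemma memR2 (h : Γ.H) (hne : h ≠ h₀) : Γ.relR2 h ∈ Γ.relsMinus h₀ :=
  Or.inl (Or.inl (Or.inr ⟨h, hne, rfl⟩))

lemma memR3 (e : Γ.E) (he : e ∉ Γ.tree) : Γ.relR3 e he ∈ Γ.relsMinus h₀ :=
  Or.inl (Or.inr ⟨e, he, rfl⟩)

lemma memR4a (v : Γ.V) (j : Fin (Γ.genus v)) :
    ⁅FreeGroup.of (Gen.vert v), FreeGroup.of (Gen.hA v j)⁆ ∈ Γ.relsMinus h₀ :=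
  Or.inr ⟨v, j, Or.inl rfl⟩

lemma memR4b (v : Γ.V) (j : Fin (Γ.genus v)) :
    ⁅FreeGroup.of (Gen.vert v), FreeGroup.of (Gen.hB v j)⁆ ∈ Γ.relsMinus h₀ :=
  Or.inr ⟨v, j, Or.inr rfl⟩

/-- the edge factor in `edgeProd` -/
def eF (v : Γ.V) (e : Γ.E) : FreeGroup Γ.Gen :=
  Γ.gammaHat v e * FreeGroup.of (Gen.vert (Γ.otherEnd v e)) * (Γ.gammaHat v e)⁻¹

lemma q_edgeProd (v : Γ.V) :
    qh Γ h₀ (Γ.edgeProd v) =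
      (((Γ.edgesAt v).sort (· ≤ ·)).map fun e => qh Γ h₀ (Γ.eF v e)).prod := by
  rw [edgeProd, map_list_prod, List.map_map]
  rfl

lemma q_arrowProd (v : Γ.V) :
    qh Γ h₀ (Γ.arrowProd v) =
      (((Γ.arrowsAt v).sort (· ≤ ·)).map fun a =>
        qh Γ h₀ (FreeGroup.of (Gen.arrow a))).prod := by
  rw [arrowProd, map_list_prod, List.map_map]
  rfl

lemma comm_R3 (e : Γ.E) (he : e ∉ Γ.tree) :
    Commute (qv Γ h₀ (Γ.src e))
      (qh Γ h₀ (FreeGroup.of (Gen.edge e he)) * qv Γ h₀ (Γ.tgt e) *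
        (qh Γ h₀ (FreeGroup.of (Gen.edge e he)))⁻¹) := by
  have h1 := q_rel Γ h₀ (Γ.memR3 h₀ e he)
  rw [relR3, map_commutatorElement] at h1
  have := commutatorElement_eq_one_iff_commute.mp h1
  simp only [map_mul, map_inv] at this
  exact this

lemma comm_factor_tree (v : Γ.V) (e : Γ.E) (he : e ∈ Γ.tree) :
    qh Γ h₀ (Γ.eF v e) = qv Γ h₀ (Γ.otherEnd v e) := by
  have hg : Γ.gammaHat v e = 1 := dif_pos he
  rw [eF, hg, one_mul, inv_one, mul_one]
  rfl

lemma comm_factor_nontree (v : Γ.V) (e : Γ.E) (he : e ∉ Γ.tree) (hev : e ∈ Γ.edgesAt v) :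
    Commute (qv Γ h₀ v) (qh Γ h₀ (Γ.eF v e)) := by
  have hc := Γ.comm_R3 h₀ e he
  by_cases hsrc : Γ.src e = v
  · have hOE : Γ.otherEnd v e = Γ.tgt e := if_pos hsrc
    have hgh : Γ.gammaHat v e = FreeGroup.of (Gen.edge e he) := by
      rw [gammaHat, dif_neg he, if_pos hsrc]
    rw [eF, hOE, hgh]
    simp only [map_mul, map_inv]
    have := hc
    rwa [hsrc] at this
  · have htgt : Γ.tgt e = v := by
      rcases (Γ.mem_edgesAt).mp hev with h | h
      · exact absurd h hsrc
      · exact h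
    have hOE : Γ.otherEnd v e = Γ.src e := if_neg hsrc
    have hgh : Γ.gammaHat v e = (FreeGroup.of (Gen.edge e he))⁻¹ := by
      rw [gammaHat, dif_neg he, if_neg hsrc]
    rw [eF, hOE, hgh]
    simp only [map_mul, map_inv, inv_inv]
    have := commute_conj_swap hc
    rwa [htgt] at this

lemma comm_genus (v : Γ.V) : Commute (qv Γ h₀ v) (qh Γ h₀ (Γ.genusProd v)) := by
  rw [genusProd, map_list_prod, List.map_map]
  apply Commute.list_prod_right
  intro y hy
  simp only [List.mem_map, Function.comp_apply] at hy
  obtain ⟨j, _, rfl⟩ := hy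
  rw [map_commutatorElement]
  have hja : Commute (qv Γ h₀ v) (qh Γ h₀ (FreeGroup.of (Gen.hA v j))) := by
    have := q_rel Γ h₀ (Γ.memR4a h₀ v j)
    rw [map_commutatorElement] at this
    exact commutatorElement_eq_one_iff_commute.mp this
  have hjb : Commute (qv Γ h₀ v) (qh Γ h₀ (FreeGroup.of (Gen.hB v j))) := by
    have := q_rel Γ h₀ (Γ.memR4b h₀ v j)
    rw [map_commutatorElement] at this
    exact commutatorElement_eq_one_iff_commute.mp this
  rw [commutatorElement_def]
  exact ((hja.mul_right hjb).mul_right hja.inv_right).mul_right hjb.inv_right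

lemma comm_arrow (a : Γ.H) (hne : a ≠ h₀) :
    Commute (qv Γ h₀ (Γ.vh a)) (qh Γ h₀ (FreeGroup.of (Gen.arrow a))) := by
  have := q_rel Γ h₀ (Γ.memR2 h₀ a hne)
  rw [relR2, map_commutatorElement] at this
  exact (commutatorElement_eq_one_iff_commute.mp this).symm

lemma comm_arrowProd (v : Γ.V) (hv : ∀ a : Γ.H, Γ.vh a = v → a ≠ h₀) :
    Commute (qv Γ h₀ v) (qh Γ h₀ (Γ.arrowProd v)) := by
  rw [q_arrowProd]
  apply Commute.list_prod_right
  intro y hy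
  simp only [List.mem_map] at hy
  obtain ⟨a, ha, rfl⟩ := hy
  have hva : Γ.vh a = v := by
    have := (Finset.mem_sort _).mp ha
    simpa [arrowsAt] using this
  have := Γ.comm_arrow h₀ a (hv a hva)
  rwa [hva] at this

lemma comm_edgeProd_of_R1 (v : Γ.V)
    (hA : Commute (qv Γ h₀ v) (qh Γ h₀ (Γ.arrowProd v))) :
    Commute (qv Γ h₀ v) (qh Γ h₀ (Γ.edgeProd v)) := by
  have h1 := q_rel Γ h₀ (Γ.memR1 h₀ v)
  rw [relR1] at h1
  simp only [map_mul, map_inv, map_zpow] at h1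
  have h2 : qh Γ h₀ (Γ.edgeProd v) * qh Γ h₀ (Γ.arrowProd v) *
      (qv Γ h₀ v) ^ (Γ.euler v) = qh Γ h₀ (Γ.genusProd v) := by
    rwa [mul_inv_eq_one] at h1
  have hE : qh Γ h₀ (Γ.edgeProd v) = qh Γ h₀ (Γ.genusProd v) *
      ((qv Γ h₀ v) ^ (Γ.euler v))⁻¹ * (qh Γ h₀ (Γ.arrowProd v))⁻¹ := by
    rw [← h2]; group
  have hG := Γ.comm_genus h₀ v
  have hP : Commute (qv Γ h₀ v) ((qv Γ h₀ v) ^ (Γ.euler v)) :=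
    (Commute.refl _).zpow_right _
  rw [hE]
  exact (hG.mul_right hP.inv_right).mul_right hA.inv_right

lemma key : Γ.relR2 h₀ ∈ Subgroup.normalClosure (Γ.relsMinus h₀) := by
  classical
  have hT := Γ.TG_isTree
  set v₀ := Γ.vh h₀ with hv₀
  -- the main induction up the tree
  have main : ∀ n : ℕ, ∀ u w : Γ.V, (Γ.TG).Adj u w →
      (treePath hT v₀ w).length < (treePath hT v₀ u).length →
      Fintype.card Γ.V - (treePath hT v₀ u).length ≤ n →
      Commute (qv Γ h₀ u) (qv Γ h₀ w) := by
    intro n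
    induction n with
    | zero =>
      intro u w _ _ hn
      have := (treePath_isPath hT v₀ u).length_lt
      omega
    | succ n IH =>
      intro u w hadj hlt hn
      have hune : u ≠ v₀ := by
        intro h
        have h0 := treePath_root hT v₀
        rw [h] at hlt
        omega
      have hA : Commute (qv Γ h₀ u) (qh Γ h₀ (Γ.arrowProd u)) := by
        apply Γ.comm_arrowProd h₀ u
        intro a hva hah
        exact hune (by rw [← hva, hah, ← hv₀])
      have hE := Γ.comm_edgeProd_of_R1 h₀ u hA
      have hnuw : u ≠ w := hadj.ne
      obtain ⟨e₀, he₀t, he₀⟩ := hadj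
      have he₀v : e₀ ∈ Γ.edgesAt u := by
        rw [Γ.mem_edgesAt]
        rcases he₀ with ⟨h1, _⟩ | ⟨_, h2⟩
        · exact Or.inl h1
        · exact Or.inr h2
      have hOE₀ : Γ.otherEnd u e₀ = w := by
        rcases he₀ with ⟨h1, h2⟩ | ⟨h1, h2⟩
        · rw [otherEnd, if_pos h1]; exact h2
        · rw [otherEnd, if_neg (fun hc => hnuw ((h1.symm.trans hc).symm))]; exact h1
      -- decompose the sorted edge list around e₀
      set l := (Γ.edgesAt u).sort (· ≤ ·) with hldef
      have he₀l : e₀ ∈ l := (Finset.mem_sort _).mpr he₀v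
      obtain ⟨l₁, l₂, hsplit⟩ := List.append_of_mem he₀l
      have hnd : (l₁ ++ e₀ :: l₂).Nodup := by
        rw [← hsplit]; exact Finset.sort_nodup _ _
      rcases List.nodup_append'.mp hnd with ⟨hnd1, hnd2, hdisj⟩
      have hne₀₁ : e₀ ∉ l₁ := fun hmem => hdisj hmem List.mem_cons_self
      have hne₀₂ : e₀ ∉ l₂ := (List.nodup_cons.mp hnd2).1
      have hother : ∀ b ∈ Γ.edgesAt u, b ≠ e₀ →
          Commute (qv Γ h₀ u) (qh Γ h₀ (Γ.eF u b)) := by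
        intro b hb hbne
        by_cases hbt : b ∈ Γ.tree
        · rw [Γ.comm_factor_tree h₀ u b hbt]
          obtain ⟨hxadj, hxne⟩ := Γ.adj_otherEnd hbt hb
          have hxw : Γ.otherEnd u b ≠ w := by
            intro hxw
            exact hbne (Γ.tree_edge_eq_of_otherEnd hbt he₀t hb he₀v (by rw [hxw, hOE₀]))
          have hadj' : (Γ.TG).Adj u w := ⟨e₀, he₀t, he₀⟩
          have hfar := treePath_neighbor_far hT hadj' hlt hxadj hxw
          have hxcard := (treePath_isPath hT v₀ (Γ.otherEnd u b)).length_lt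
          exact (IH (Γ.otherEnd u b) u hxadj.symm hfar (by omega)).symm
        · exact Γ.comm_factor_nontree h₀ u b hbt hb
      have hprod : Commute (qv Γ h₀ u)
          ((l.map fun e => qh Γ h₀ (Γ.eF u e)).prod) := by
        rw [← q_edgeProd]; exact hE
      have hmemsub : ∀ b, b ∈ l₁ ∨ b ∈ l₂ → b ∈ Γ.edgesAt u ∧ b ≠ e₀ := by
        intro b hb
        constructor
        · have hbl : b ∈ l := by
            rw [hsplit]
            rcases hb with hb | hb
            · exact List.mem_append_left _ hb
            · exact List.mem_append_right _ (List.mem_cons_of_mem _ hb)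
          exact (Finset.mem_sort (α := Γ.E) (· ≤ ·)).mp hbl
        · rintro rfl
          rcases hb with hb | hb
          · exact hne₀₁ hb
          · exact hne₀₂ hb
      have hcomm : Commute (qv Γ h₀ u) (qh Γ h₀ (Γ.eF u e₀)) := by
        apply commute_extract (l := l.map fun e => qh Γ h₀ (Γ.eF u e))
        · refine ⟨l₁.map fun e => qh Γ h₀ (Γ.eF u e), l₂.map fun e => qh Γ h₀ (Γ.eF u e),
            ?_, ?_, ?_⟩
          · rw [hsplit, List.map_append, List.map_cons]
          · intro b hb
            obtain ⟨c, hc, rfl⟩ := List.mem_map.mp hb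
            obtain ⟨hc1, hc2⟩ := hmemsub c (Or.inl hc)
            exact hother c hc1 hc2
          · intro b hb
            obtain ⟨c, hc, rfl⟩ := List.mem_map.mp hb
            obtain ⟨hc1, hc2⟩ := hmemsub c (Or.inr hc)
            exact hother c hc1 hc2
        · exact hprod
      rw [Γ.comm_factor_tree h₀ u e₀ he₀t, hOE₀] at hcomm
      exact hcomm
  -- now the root step
  have hEroot : Commute (qv Γ h₀ v₀) (qh Γ h₀ (Γ.edgeProd v₀)) := by
    rw [q_edgeProd]
    apply Commute.list_prod_right
    intro y hy
    obtain ⟨b, hb, rfl⟩ := List.mem_map.mp hy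
    have hbv : b ∈ Γ.edgesAt v₀ := (Finset.mem_sort _).mp hb
    by_cases hbt : b ∈ Γ.tree
    · rw [Γ.comm_factor_tree h₀ v₀ b hbt]
      obtain ⟨hxadj, hxne⟩ := Γ.adj_otherEnd hbt hbv
      have hlt : (treePath hT v₀ v₀).length < (treePath hT v₀ (Γ.otherEnd v₀ b)).length := by
        have h0 := treePath_root hT v₀
        have hp := treePath_pos hT hxne
        omega
      exact (main (Fintype.card Γ.V) (Γ.otherEnd v₀ b) v₀ hxadj.symm hlt (by omega)).symm
    · exact Γ.comm_factor_nontree h₀ v₀ b hbt hbv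
  have h1 := q_rel Γ h₀ (Γ.memR1 h₀ v₀)
  rw [relR1] at h1
  simp only [map_mul, map_inv, map_zpow] at h1
  have h2 : qh Γ h₀ (Γ.edgeProd v₀) * qh Γ h₀ (Γ.arrowProd v₀) *
      (qv Γ h₀ v₀) ^ (Γ.euler v₀) = qh Γ h₀ (Γ.genusProd v₀) := by
    rwa [mul_inv_eq_one] at h1
  have hAeq : qh Γ h₀ (Γ.arrowProd v₀) = (qh Γ h₀ (Γ.edgeProd v₀))⁻¹ *
      qh Γ h₀ (Γ.genusProd v₀) * ((qv Γ h₀ v₀) ^ (Γ.euler v₀))⁻¹ := by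
    rw [← h2]; group
  have hP : Commute (qv Γ h₀ v₀) ((qv Γ h₀ v₀) ^ (Γ.euler v₀)) :=
    (Commute.refl _).zpow_right _
  have hAroot : Commute (qv Γ h₀ v₀) (qh Γ h₀ (Γ.arrowProd v₀)) := by
    rw [hAeq]
    exact (hEroot.inv_right.mul_right (Γ.comm_genus h₀ v₀)).mul_right hP.inv_right
  -- extract h₀ from the arrow product
  have hh₀v : h₀ ∈ Γ.arrowsAt v₀ := by simp [arrowsAt, hv₀]
  set la := (Γ.arrowsAt v₀).sort (· ≤ ·) with hladef
  have hh₀l : h₀ ∈ la := (Finset.mem_sort _).mpr hh₀v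
  obtain ⟨la₁, la₂, hsplit⟩ := List.append_of_mem hh₀l
  have hnd : (la₁ ++ h₀ :: la₂).Nodup := by
    rw [← hsplit]; exact Finset.sort_nodup _ _
  rcases List.nodup_append'.mp hnd with ⟨hnd1, hnd2, hdisj⟩
  have hne₀₁ : h₀ ∉ la₁ := fun hmem => hdisj hmem List.mem_cons_self
  have hne₀₂ : h₀ ∉ la₂ := (List.nodup_cons.mp hnd2).1
  have hmemsub : ∀ a, a ∈ la₁ ∨ a ∈ la₂ → Γ.vh a = v₀ ∧ a ≠ h₀ := by
    intro a ha
    constructor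
    · have : a ∈ la := by
        rw [hsplit]
        rcases ha with ha | ha
        · exact List.mem_append_left _ ha
        · exact List.mem_append_right _ (List.mem_cons_of_mem _ ha)
      have := (Finset.mem_sort (α := Γ.H) (· ≤ ·)).mp this
      simpa [arrowsAt] using this
    · rintro rfl
      rcases ha with ha | ha
      · exact hne₀₁ ha
      · exact hne₀₂ ha
  have hprodA : Commute (qv Γ h₀ v₀)
      ((la.map fun a => qh Γ h₀ (FreeGroup.of (Gen.arrow a))).prod) := by
    rw [← q_arrowProd]; exact hAroot
  have hcomm : Commute (qv Γ h₀ v₀) (qh Γ h₀ (FreeGroup.of (Gen.arrow h₀))) := by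
    apply commute_extract (l := la.map fun a => qh Γ h₀ (FreeGroup.of (Gen.arrow a)))
    · refine ⟨la₁.map fun a => qh Γ h₀ (FreeGroup.of (Gen.arrow a)),
        la₂.map fun a => qh Γ h₀ (FreeGroup.of (Gen.arrow a)), ?_, ?_, ?_⟩
      · rw [hsplit, List.map_append, List.map_cons]
      · intro b hb
        obtain ⟨c, hc, rfl⟩ := List.mem_map.mp hb
        obtain ⟨hc1, hc2⟩ := hmemsub c (Or.inl hc)
        have := Γ.comm_arrow h₀ c hc2
        rwa [hc1] at this
      · intro b hb
        obtain ⟨c, hc, rfl⟩ := List.mem_map.mp hb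
        obtain ⟨hc1, hc2⟩ := hmemsub c (Or.inr hc)
        have := Γ.comm_arrow h₀ c hc2
        rwa [hc1] at this
    · exact hprodA
  have hone : qh Γ h₀ (Γ.relR2 h₀) = 1 := by
    rw [relR2, map_commutatorElement]
    exact commutatorElement_eq_one_iff_commute.mpr hcomm.symm
  exact (QuotientGroup.eq_one_iff _).mp hone

end RedundantGroup

/-- If `H ≠ ∅` and `h₀ ∈ H`, the relation (R2) for `h₀` is a consequence of the
remaining relations: the canonical surjection from the group presented by the
relators (R1), (R3), (R4) and (R2) for `h ≠ h₀` onto `G(Γ)` (identity on the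
generators) is an isomorphism. -/

theorem redundant_R2 (Γ : PlumbingGraph) (h₀ : Γ.H) :
    ∃ φ : PresentedGroup (Γ.relsMinus h₀) ≃* PresentedGroup Γ.rels,
      ∀ x : Γ.Gen, φ (PresentedGroup.of x) = PresentedGroup.of x := by
  have hkey := Γ.key h₀
  have hsub1 : Γ.relsMinus h₀ ⊆ Γ.rels := by
    rintro r (((⟨v, rfl⟩ | ⟨h, _, rfl⟩) | hr) | hr)
    · exact Or.inl (Or.inl (Or.inl ⟨v, rfl⟩))
    · exact Or.inl (Or.inl (Or.inr ⟨h, rfl⟩))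
    · exact Or.inl (Or.inr hr)
    · exact Or.inr hr
  have hsub2 : Γ.rels ⊆ ↑(Subgroup.normalClosure (Γ.relsMinus h₀)) := by
    rintro r (((⟨v, rfl⟩ | ⟨h, rfl⟩) | hr) | hr)
    · exact Subgroup.subset_normalClosure (Γ.memR1 h₀ v)
    · by_cases hh : h = h₀
      · subst hh; exact hkey
      · exact Subgroup.subset_normalClosure (Γ.memR2 h₀ h hh)
    · obtain ⟨e, he, rfl⟩ := hr
      exact Subgroup.subset_normalClosure (Γ.memR3 h₀ e he)
    · obtain ⟨v, j, hj⟩ := hr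
      rcases hj with rfl | rfl
      · exact Subgroup.subset_normalClosure (Γ.memR4a h₀ v j)
      · exact Subgroup.subset_normalClosure (Γ.memR4b h₀ v j)
  have hcl : Subgroup.normalClosure (Γ.relsMinus h₀) = Subgroup.normalClosure Γ.rels :=
    le_antisymm (Subgroup.normalClosure_le_normal
      (Set.Subset.trans hsub1 Subgroup.subset_normalClosure))
      (Subgroup.normalClosure_le_normal hsub2)
  refine ⟨QuotientGroup.quotientMulEquivOfEq hcl, fun x => ?_⟩
  exact QuotientGroup.quotientMulEquivOfEq_mk hcl (FreeGroup.of x)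

end PlumbingGraph
end

section
/- A function ξ assigning to each generator γ_v (v ∈ V), γ_h (h ∈ H), γ_e (e ∈ E*), α_{j,v}, β_{j,v} of the plumbing group G(Γ) a value in ℂ* extends to a group homomorphism G(Γ) → ℂ* if and only if for every v ∈ V one has Π_{w∈V} ξ(γ_w)^{a_{vw}} · Π_{h∈H_v} ξ(γ_h) = 1; in that case the extension is unique. -/
open scoped BigOperators

open scoped commutatorElement

private lemma prod_sort_map {ι : Type*} [LinearOrder ι] {M : Type*} [CommMonoid M]
    (s : Finset ι) (g : ι → M) :
    ((s.sort (· ≤ ·)).map g).prod = ∏ x ∈ s, g x := by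
  rw [← Finset.prod_map_toList]
  exact ((s.sort_perm_toList (· ≤ ·)).map g).prod_eq

namespace PlumbingGraph

private lemma lift_relR1 (Γ : PlumbingGraph) (ξ₀ : Γ.Gen → ℂˣ) (v : Γ.V) :
    FreeGroup.lift ξ₀ (Γ.relR1 v) =
      (∏ w : Γ.V, ξ₀ (Gen.vert w) ^ Γ.incidence v w) *
        ∏ h ∈ Γ.arrowsAt v, ξ₀ (Gen.arrow h) := by
  classical
  set f := (FreeGroup.lift ξ₀ : FreeGroup Γ.Gen →* ℂˣ) with hf
  -- genus product maps to 1
  have hg : f (Γ.genusProd v) = 1 := by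
    rw [genusProd, map_list_prod]
    apply List.prod_eq_one
    intro x hx
    simp only [List.map_map, List.mem_map] at hx
    obtain ⟨j, -, rfl⟩ := hx
    simp only [Function.comp_apply, map_commutatorElement]
    exact commutatorElement_eq_one_iff_commute.mpr (Commute.all _ _)
  -- arrow product
  have ha : f (Γ.arrowProd v) = ∏ h ∈ Γ.arrowsAt v, ξ₀ (Gen.arrow h) := by
    rw [arrowProd, map_list_prod, List.map_map, ← prod_sort_map (Γ.arrowsAt v)]
    congr 1
    apply List.map_congr_left
    intro h _
    simp [hf]
  -- edge product
  have he : f (Γ.edgeProd v) =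
      ∏ e ∈ Γ.edgesAt v, ξ₀ (Gen.vert (Γ.otherEnd v e)) := by
    rw [edgeProd, map_list_prod, List.map_map,
      ← prod_sort_map (Γ.edgesAt v) (fun e => ξ₀ (Gen.vert (Γ.otherEnd v e)))]
    congr 1
    apply List.map_congr_left
    intro e _
    simp only [Function.comp_apply, map_mul, map_inv]
    rw [mul_comm (f (Γ.gammaHat v e)) _, mul_inv_cancel_right]
    simp [hf]
  -- the fiber cardinalities
  have hne : ∀ e, Γ.otherEnd v e ≠ v := by
    intro e
    unfold otherEnd
    split_ifs with h
    · intro hc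
      exact absurd (h ▸ hc ▸ Γ.src_lt_tgt e) (lt_irrefl _)
    · exact h
  have fiber : ∀ w : Γ.V, w ≠ v →
      ((Γ.edgesAt v).filter fun e => Γ.otherEnd v e = w) =
      (Finset.univ.filter fun e : Γ.E =>
        (Γ.src e = v ∧ Γ.tgt e = w) ∨ (Γ.src e = w ∧ Γ.tgt e = v)) := by
    intro w hw
    ext e
    simp only [Finset.mem_filter, Finset.mem_univ, true_and]
    simp only [edgesAt, otherEnd, Finset.mem_filter, Finset.mem_univ, true_and]
    constructor
    · rintro ⟨hsv | htv, ho⟩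
      · rw [if_pos hsv] at ho
        exact Or.inl ⟨hsv, ho⟩
      · by_cases hs : Γ.src e = v
        · rw [if_pos hs] at ho
          exact Or.inl ⟨hs, ho⟩
        · rw [if_neg hs] at ho
          exact Or.inr ⟨ho, htv⟩
    · rintro (⟨h1, h2⟩ | ⟨h1, h2⟩)
      · exact ⟨Or.inl h1, by rw [if_pos h1]; exact h2⟩
      · refine ⟨Or.inr h2, ?_⟩
        have hs : Γ.src e ≠ v := by rw [h1]; exact hw
        rw [if_neg hs]; exact h1
  have fiber_v : ((Γ.edgesAt v).filter fun e => Γ.otherEnd v e = v) = ∅ := by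
    apply Finset.filter_false_of_mem
    intro e _
    exact hne e
  -- edge product as a product over vertices
  have he2 : (∏ e ∈ Γ.edgesAt v, ξ₀ (Gen.vert (Γ.otherEnd v e))) =
      ∏ w : Γ.V, ξ₀ (Gen.vert w) ^
        (((Γ.edgesAt v).filter fun e => Γ.otherEnd v e = w).card) := by
    rw [← Finset.prod_fiberwise_of_maps_to' (g := Γ.otherEnd v)
      (fun e _ => Finset.mem_univ _) (fun w => ξ₀ (Gen.vert w))]
    refine Finset.prod_congr rfl fun w _ => ?_
    rw [Finset.prod_const]
  -- incidence decomposition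
  have hinc : ∀ w : Γ.V, Γ.incidence v w =
      ((((Γ.edgesAt v).filter fun e => Γ.otherEnd v e = w).card : ℤ)) +
        (if w = v then Γ.euler v else 0) := by
    intro w
    by_cases hw : w = v
    · subst hw
      rw [fiber_v]
      simp [incidence]
    · rw [fiber w hw, incidence]
      simp [Ne.symm hw, hw]
  have main : (∏ w : Γ.V, ξ₀ (Gen.vert w) ^ Γ.incidence v w) =
      (∏ e ∈ Γ.edgesAt v, ξ₀ (Gen.vert (Γ.otherEnd v e))) *
        ξ₀ (Gen.vert v) ^ Γ.euler v := by
    rw [he2]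
    have : ∀ w : Γ.V, ξ₀ (Gen.vert w) ^ Γ.incidence v w =
        ξ₀ (Gen.vert w) ^
          (((Γ.edgesAt v).filter fun e => Γ.otherEnd v e = w).card) *
          (if w = v then ξ₀ (Gen.vert w) ^ Γ.euler v else 1) := by
      intro w
      rw [hinc w, zpow_add, zpow_natCast]
      congr 1
      split_ifs <;> simp
    rw [Finset.prod_congr rfl fun w _ => this w, Finset.prod_mul_distrib,
      Finset.prod_ite_eq' Finset.univ v (fun w => ξ₀ (Gen.vert w) ^ Γ.euler v)]
    simp
  -- put everything together
  rw [relR1]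
  simp only [map_mul, map_inv, map_zpow, hg, inv_one, mul_one, ha, he]
  rw [main, FreeGroup.lift_apply_of]
  exact mul_right_comm _ _ _
/-- A function `ξ₀` on the generators of `G(Γ)` with values in `ℂ*` extends to a
group homomorphism (necessarily uniquely) `G(Γ) → ℂ*` if and only if for every
vertex `v` one has `Π_{w∈V} ξ₀(γ_w)^{a_{vw}} · Π_{h∈H_v} ξ₀(γ_h) = 1`. -/
theorem character_extension (Γ : PlumbingGraph) (ξ₀ : Γ.Gen → ℂˣ) :
    (∃! φ : Γ.Grp →* ℂˣ, ∀ x : Γ.Gen, φ (PresentedGroup.of x) = ξ₀ x) ↔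
      ∀ v : Γ.V,
        (∏ w : Γ.V, ξ₀ (Gen.vert w) ^ Γ.incidence v w) *
          ∏ h ∈ Γ.arrowsAt v, ξ₀ (Gen.arrow h) = 1 := by
  classical
  constructor
  · rintro ⟨φ, hφ, -⟩ v
    have hcomp : (FreeGroup.lift ξ₀ : FreeGroup Γ.Gen →* ℂˣ) =
        φ.comp (QuotientGroup.mk' (Subgroup.normalClosure Γ.rels)) := by
      apply FreeGroup.ext_hom
      intro a
      rw [FreeGroup.lift_apply_of]
      exact (hφ a).symm
    have hmem : Γ.relR1 v ∈ Subgroup.normalClosure Γ.rels :=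
      Subgroup.subset_normalClosure (Or.inl (Or.inl (Or.inl ⟨v, rfl⟩)))
    have : FreeGroup.lift ξ₀ (Γ.relR1 v) = 1 := by
      rw [hcomp]
      show φ (QuotientGroup.mk' _ (Γ.relR1 v)) = 1
      rw [QuotientGroup.mk'_apply, (QuotientGroup.eq_one_iff _).mpr hmem]; exact map_one φ
    rw [← lift_relR1 Γ ξ₀ v]
    exact this
  · intro hcond
    have h : ∀ r ∈ Γ.rels, FreeGroup.lift ξ₀ r = 1 := by
      rintro r (((⟨v, rfl⟩ | ⟨hd, rfl⟩) | ⟨e, he, rfl⟩) | ⟨w, j, (rfl | rfl)⟩)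
      · rw [lift_relR1]; exact hcond v
      · show FreeGroup.lift ξ₀ (Γ.relR2 hd) = 1
        rw [relR2, map_commutatorElement]
        exact commutatorElement_eq_one_iff_commute.mpr (Commute.all _ _)
      · rw [relR3, map_commutatorElement]
        exact commutatorElement_eq_one_iff_commute.mpr (Commute.all _ _)
      · rw [map_commutatorElement]
        exact commutatorElement_eq_one_iff_commute.mpr (Commute.all _ _)
      · rw [map_commutatorElement]
        exact commutatorElement_eq_one_iff_commute.mpr (Commute.all _ _)
    refine ⟨PresentedGroup.toGroup h, fun x => PresentedGroup.toGroup.of h, ?_⟩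
    intro ψ hψ
    exact MonoidHom.ext fun x => PresentedGroup.toGroup.unique h ψ hψ

end PlumbingGraph
end

section
/- The group with presentation ⟨γ₁, γ₂, γ₃, γ₄, δ₂, δ₄ | γ₂ = γ₁², γ₁γ₄δ₂ = γ₂³, γ₄ = γ₃², γ₂γ₃δ₄ = γ₄, [γ₂, δ₂] = 1, [γ₄, δ₄] = 1⟩ is isomorphic to the group ⟨a, b | [a², b²] = 1⟩, via an isomorphism sending γ₁ to a and γ₃ to b. -/
open scoped commutatorElement

/-- the six generators `γ₁, γ₂, γ₃, γ₄, δ₂, δ₄` -/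
inductive GenSix : Type
  | g1 | g2 | g3 | g4 | d2 | d4

open GenSix in
/-- the relators `γ₂γ₁⁻², γ₁γ₄δ₂(γ₂³)⁻¹, γ₄γ₃⁻², γ₂γ₃δ₄γ₄⁻¹, [γ₂,δ₂], [γ₄,δ₄]` -/
def relsSix : Set (FreeGroup GenSix) :=
  { FreeGroup.of g2 * (FreeGroup.of g1 ^ 2)⁻¹,
    FreeGroup.of g1 * FreeGroup.of g4 * FreeGroup.of d2 * (FreeGroup.of g2 ^ 3)⁻¹,
    FreeGroup.of g4 * (FreeGroup.of g3 ^ 2)⁻¹,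
    FreeGroup.of g2 * FreeGroup.of g3 * FreeGroup.of d4 * (FreeGroup.of g4)⁻¹,
    ⁅FreeGroup.of g2, FreeGroup.of d2⁆,
    ⁅FreeGroup.of g4, FreeGroup.of d4⁆ }

/-- the two generators `a, b` -/
inductive GenTwo : Type
  | a | b

/-- the single relator `[a², b²]` -/
def relsTwo : Set (FreeGroup GenTwo) :=
  { ⁅FreeGroup.of GenTwo.a ^ 2, FreeGroup.of GenTwo.b ^ 2⁆ }

lemma rel_one {α : Type*} {rels : Set (FreeGroup α)} {r : FreeGroup α} (hr : r ∈ rels) :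
    PresentedGroup.mk rels r = 1 :=
  (QuotientGroup.eq_one_iff r).mpr (Subgroup.subset_normalClosure hr)

open GenSix GenTwo

noncomputable section

abbrev A : PresentedGroup relsTwo := PresentedGroup.of GenTwo.a
abbrev B : PresentedGroup relsTwo := PresentedGroup.of GenTwo.b

lemma hAB : A^2 * B^2 = B^2 * A^2 := by
  have := rel_one (rels := relsTwo) (r := ⁅FreeGroup.of GenTwo.a ^ 2, FreeGroup.of GenTwo.b ^ 2⁆) rfl
  have h2 : (⁅A^2, B^2⁆ : PresentedGroup relsTwo) = 1 := by
    simpa [PresentedGroup.of, commutatorElement_def] using this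
  rw [commutatorElement_def] at h2
  rw [← one_mul (B^2 * A^2), ← h2]; group

def fmap : GenSix → PresentedGroup relsTwo
  | .g1 => A
  | .g2 => A^2
  | .g3 => B
  | .g4 => B^2
  | .d2 => B⁻¹^2 * A^5
  | .d4 => B⁻¹ * A⁻¹^2 * B^2

lemma fcheck : ∀ r ∈ relsSix, FreeGroup.lift fmap r = 1 := by
  intro r hr
  have hc := hAB
  rcases hr with rfl|rfl|rfl|rfl|rfl|rfl <;>
    simp only [map_mul, map_inv, map_pow, FreeGroup.lift_apply_of, commutatorElement_def, fmap] <;>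
    group
  all_goals {
    have h1 : A^(2:ℤ) * B^(-2:ℤ) = B^(-2:ℤ) * A^(2:ℤ) := by
      calc A^(2:ℤ)*B^(-2:ℤ) = B^(-2:ℤ)*(B^2*A^2)*B^(-2:ℤ) := by group
        _ = B^(-2:ℤ)*(A^2*B^2)*B^(-2:ℤ) := by rw [hc]
        _ = B^(-2:ℤ)*A^(2:ℤ) := by group
    first
    | (rw [show A^(2:ℤ)*B^(-2:ℤ)*A^(-2:ℤ)*B^(2:ℤ) = (A^(2:ℤ)*B^(-2:ℤ))*A^(-2:ℤ)*B^(2:ℤ) from by group, h1]; group)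
    | (rw [show B * A^(-2:ℤ)*B^(-2:ℤ)*A^(2:ℤ)*B = B*A^(-2:ℤ)*(B^(-2:ℤ)*A^(2:ℤ))*B from by group, ← h1]; group) }

abbrev G1 : PresentedGroup relsSix := PresentedGroup.of GenSix.g1
abbrev G2 : PresentedGroup relsSix := PresentedGroup.of GenSix.g2
abbrev G3 : PresentedGroup relsSix := PresentedGroup.of GenSix.g3
abbrev G4 : PresentedGroup relsSix := PresentedGroup.of GenSix.g4
abbrev D2 : PresentedGroup relsSix := PresentedGroup.of GenSix.d2
abbrev D4 : PresentedGroup relsSix := PresentedGroup.of GenSix.d4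

lemma e2 : G2 = G1^2 := by
  have := rel_one (rels := relsSix)
    (r := FreeGroup.of g2 * (FreeGroup.of g1 ^ 2)⁻¹) (by simp [relsSix])
  have h : G2 * (G1^2)⁻¹ = 1 := by simpa [PresentedGroup.of] using this
  exact mul_inv_eq_one.mp h

lemma e4 : G4 = G3^2 := by
  have := rel_one (rels := relsSix)
    (r := FreeGroup.of g4 * (FreeGroup.of g3 ^ 2)⁻¹) (by simp [relsSix])
  have h : G4 * (G3^2)⁻¹ = 1 := by simpa [PresentedGroup.of] using this
  exact mul_inv_eq_one.mp h

lemma ed2 : G1 * G4 * D2 = G2^3 := by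
  have := rel_one (rels := relsSix)
    (r := FreeGroup.of g1 * FreeGroup.of g4 * FreeGroup.of d2 * (FreeGroup.of g2 ^ 3)⁻¹)
    (by simp [relsSix])
  have h : G1 * G4 * D2 * (G2^3)⁻¹ = 1 := by simpa [PresentedGroup.of] using this
  exact mul_inv_eq_one.mp h

lemma ed4 : G2 * G3 * D4 = G4 := by
  have := rel_one (rels := relsSix)
    (r := FreeGroup.of g2 * FreeGroup.of g3 * FreeGroup.of d4 * (FreeGroup.of g4)⁻¹)
    (by simp [relsSix])
  have h : G2 * G3 * D4 * G4⁻¹ = 1 := by simpa [PresentedGroup.of] using this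
  exact mul_inv_eq_one.mp h

lemma c2 : G2 * D2 = D2 * G2 := by
  have := rel_one (rels := relsSix)
    (r := ⁅FreeGroup.of g2, FreeGroup.of d2⁆) (by simp [relsSix])
  have h : G2 * D2 * G2⁻¹ * D2⁻¹ = 1 := by
    simpa [PresentedGroup.of, commutatorElement_def] using this
  rw [← one_mul (D2 * G2), ← h]; group

lemma c4 : G4 * D4 = D4 * G4 := by
  have := rel_one (rels := relsSix)
    (r := ⁅FreeGroup.of g4, FreeGroup.of d4⁆) (by simp [relsSix])
  have h : G4 * D4 * G4⁻¹ * D4⁻¹ = 1 := by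
    simpa [PresentedGroup.of, commutatorElement_def] using this
  rw [← one_mul (D4 * G4), ← h]; group

lemma hD2 : D2 = G4⁻¹ * G1⁻¹ * G2^3 := by rw [← ed2]; group

lemma hD4 : D4 = G3⁻¹ * G2⁻¹ * G4 := by rw [← ed4]; group

lemma h12 : G1⁻¹ * G2 = G2 * G1⁻¹ := by rw [e2]; group

lemma comm24 : G2 * G4 = G4 * G2 := by
  have key : G2 * (G4⁻¹ * G1⁻¹ * G2^3) = (G4⁻¹ * G1⁻¹ * G2^3) * G2 := by
    rw [← hD2]; exact c2
  have step : G2 * G4⁻¹ * G1⁻¹ = G4⁻¹ * G1⁻¹ * G2 := by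
    have := mul_right_cancel (a := G2 * G4⁻¹ * G1⁻¹) (b := G2^3)
      (c := G4⁻¹ * G1⁻¹ * G2) ?_
    · exact this
    · calc G2 * G4⁻¹ * G1⁻¹ * G2^3 = G2 * (G4⁻¹ * G1⁻¹ * G2^3) := by group
        _ = (G4⁻¹ * G1⁻¹ * G2^3) * G2 := key
        _ = G4⁻¹ * G1⁻¹ * G2 * G2^3 := by group
  have step2 : G2 * G4⁻¹ = G4⁻¹ * G2 := by
    have h' : G2 * G4⁻¹ * G1⁻¹ = G4⁻¹ * G2 * G1⁻¹ := by
      rw [step, show G4⁻¹ * G1⁻¹ * G2 = G4⁻¹ * (G1⁻¹ * G2) from by group, h12]; group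
    exact mul_right_cancel h'
  rw [show G2 * G4 = G4 * (G4⁻¹ * G2) * G4 from by group, ← step2]; group

def gmap : GenTwo → PresentedGroup relsSix
  | .a => G1
  | .b => G3

lemma gcheck : ∀ r ∈ relsTwo, FreeGroup.lift gmap r = 1 := by
  intro r hr
  rcases hr with rfl
  simp only [commutatorElement_def, map_mul, map_inv, map_pow, FreeGroup.lift_apply_of, gmap]
  rw [← e2, ← e4, show G2 * G4 * G2⁻¹ * G4⁻¹ = (G2 * G4) * G2⁻¹ * G4⁻¹ from by group,
    comm24]
  group

def φh : PresentedGroup relsSix →* PresentedGroup relsTwo := PresentedGroup.toGroup fcheck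
def ψh : PresentedGroup relsTwo →* PresentedGroup relsSix := PresentedGroup.toGroup gcheck

lemma hgf : ψh.comp φh = MonoidHom.id _ := by
  apply PresentedGroup.ext
  intro x
  cases x <;>
    simp only [MonoidHom.comp_apply, MonoidHom.id_apply, φh, ψh,
      PresentedGroup.toGroup.of, fmap, map_mul, map_inv, map_pow, gmap]
  · exact e2.symm
  · exact e4.symm
  · show _ = D2
    rw [hD2, e2, e4]; group
  · show _ = D4
    rw [hD4, e2, e4]; group

lemma hfg : φh.comp ψh = MonoidHom.id _ := by
  apply PresentedGroup.ext
  intro x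
  cases x <;>
    simp only [MonoidHom.comp_apply, MonoidHom.id_apply, φh, ψh,
      PresentedGroup.toGroup.of, fmap, gmap]

end

/-- The group `⟨γ₁,…,γ₄,δ₂,δ₄ ∣ γ₂ = γ₁², γ₁γ₄δ₂ = γ₂³, γ₄ = γ₃², γ₂γ₃δ₄ = γ₄,
[γ₂,δ₂] = 1, [γ₄,δ₄] = 1⟩` is isomorphic to `⟨a, b ∣ [a², b²] = 1⟩`
via `γ₁ ↦ a`, `γ₃ ↦ b`. -/
theorem presentation_acampo :
    ∃ φ : PresentedGroup relsSix ≃* PresentedGroup relsTwo,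
      φ (PresentedGroup.of GenSix.g1) = PresentedGroup.of GenTwo.a ∧
      φ (PresentedGroup.of GenSix.g3) = PresentedGroup.of GenTwo.b := by
  refine ⟨MonoidHom.toMulEquiv φh ψh hgf hfg, ?_, ?_⟩ <;>
    simp [MonoidHom.toMulEquiv, φh, PresentedGroup.toGroup.of, fmap]
end

section
/- The group with presentation ⟨γ₁, γ₂, δ | γ₂δγ₂δ⁻¹ = γ₁⁵, γ₁δ⁻¹γ₁δ = γ₂, [γ₁, δγ₂δ⁻¹] = 1⟩ is isomorphic to the group ⟨γ, δ | [δγδ⁻¹, γ] = 1, (δ⁻¹γδ)(δγδ⁻¹) = γ³⟩, via an isomorphism sending γ₁ to γ and δ to δ. -/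
open scoped commutatorElement

/-- the three generators `γ₁, γ₂, δ` -/
inductive GenThree : Type
  | g1 | g2 | d

open GenThree in
/-- the relators `γ₂δγ₂δ⁻¹(γ₁⁵)⁻¹, γ₁δ⁻¹γ₁δγ₂⁻¹, [γ₁, δγ₂δ⁻¹]` -/
def relsThree : Set (FreeGroup GenThree) :=
  { FreeGroup.of g2 * FreeGroup.of d * FreeGroup.of g2 * (FreeGroup.of d)⁻¹ *
      (FreeGroup.of g1 ^ 5)⁻¹,
    FreeGroup.of g1 * (FreeGroup.of d)⁻¹ * FreeGroup.of g1 * FreeGroup.of d *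
      (FreeGroup.of g2)⁻¹,
    ⁅FreeGroup.of g1, FreeGroup.of d * FreeGroup.of g2 * (FreeGroup.of d)⁻¹⁆ }

/-- the two generators `γ, δ` -/
inductive GenGD : Type
  | g | d

open GenGD in
/-- the relators `[δγδ⁻¹, γ], (δ⁻¹γδ)(δγδ⁻¹)(γ³)⁻¹` -/
def relsGD : Set (FreeGroup GenGD) :=
  { ⁅FreeGroup.of d * FreeGroup.of g * (FreeGroup.of d)⁻¹, FreeGroup.of g⁆,
    ((FreeGroup.of d)⁻¹ * FreeGroup.of g * FreeGroup.of d) *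
      (FreeGroup.of d * FreeGroup.of g * (FreeGroup.of d)⁻¹) *
        (FreeGroup.of g ^ 3)⁻¹ }

section Aux
variable {α : Type*}

lemma CGM_mk_rel_one {rels : Set (FreeGroup α)} {r : FreeGroup α} (h : r ∈ rels) :
    PresentedGroup.mk rels r = 1 :=
  (QuotientGroup.eq_one_iff r).2 (Subgroup.subset_normalClosure h)

lemma CGM_mk_of {rels : Set (FreeGroup α)} (x : α) :
    PresentedGroup.mk rels (FreeGroup.of x) = PresentedGroup.of x := rfl

end Aux

namespace CGM
open GenThree GenGD

noncomputable section

local notation "G" => (PresentedGroup.of GenGD.g : PresentedGroup relsGD)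
local notation "D" => (PresentedGroup.of GenGD.d : PresentedGroup relsGD)
local notation "A" => (PresentedGroup.of GenThree.g1 : PresentedGroup relsThree)
local notation "B" => (PresentedGroup.of GenThree.g2 : PresentedGroup relsThree)
local notation "E" => (PresentedGroup.of GenThree.d : PresentedGroup relsThree)

lemma gd_comm : (D * G * D⁻¹) * G = G * (D * G * D⁻¹) := by
  have h := CGM_mk_rel_one (rels := relsGD)
    (r := ⁅FreeGroup.of GenGD.d * FreeGroup.of GenGD.g * (FreeGroup.of GenGD.d)⁻¹,
      FreeGroup.of GenGD.g⁆) (Set.mem_insert _ _)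
  simp only [map_commutatorElement, map_mul, map_inv, CGM_mk_of] at h
  exact commutatorElement_eq_one_iff_mul_comm.mp h

lemma gd_three : (D⁻¹ * G * D) * (D * G * D⁻¹) = G ^ 3 := by
  have h := CGM_mk_rel_one (rels := relsGD)
    (r := ((FreeGroup.of GenGD.d)⁻¹ * FreeGroup.of GenGD.g * FreeGroup.of GenGD.d) *
      (FreeGroup.of GenGD.d * FreeGroup.of GenGD.g * (FreeGroup.of GenGD.d)⁻¹) *
        (FreeGroup.of GenGD.g ^ 3)⁻¹)
    (Set.mem_insert_of_mem _ rfl)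
  simp only [map_mul, map_inv, map_pow, CGM_mk_of] at h
  exact mul_inv_eq_one.mp h

lemma t1 : B * E * B * E⁻¹ = A ^ 5 := by
  have h := CGM_mk_rel_one (rels := relsThree)
    (r := FreeGroup.of g2 * FreeGroup.of GenThree.d * FreeGroup.of g2 * (FreeGroup.of GenThree.d)⁻¹ *
      (FreeGroup.of g1 ^ 5)⁻¹) (Set.mem_insert _ _)
  simp only [map_mul, map_inv, map_pow, CGM_mk_of] at h
  exact mul_inv_eq_one.mp h

lemma t2 : A * E⁻¹ * A * E = B := by
  have h := CGM_mk_rel_one (rels := relsThree)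
    (r := FreeGroup.of g1 * (FreeGroup.of GenThree.d)⁻¹ * FreeGroup.of g1 * FreeGroup.of GenThree.d *
      (FreeGroup.of g2)⁻¹) (Set.mem_insert_of_mem _ (Set.mem_insert _ _))
  simp only [map_mul, map_inv, CGM_mk_of] at h
  exact mul_inv_eq_one.mp h

lemma t3 : A * (E * B * E⁻¹) = (E * B * E⁻¹) * A := by
  have h := CGM_mk_rel_one (rels := relsThree)
    (r := ⁅FreeGroup.of g1, FreeGroup.of GenThree.d * FreeGroup.of g2 * (FreeGroup.of GenThree.d)⁻¹⁆)
    (Set.mem_insert_of_mem _ (Set.mem_insert_of_mem _ rfl))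
  simp only [map_commutatorElement, map_mul, map_inv, CGM_mk_of] at h
  exact commutatorElement_eq_one_iff_mul_comm.mp h

lemma s1 : A * (E * A * E⁻¹) = (E * A * E⁻¹) * A := by
  have hb : E * B * E⁻¹ = E * A * E⁻¹ * A := by rw [← t2]; group
  have h := t3
  rw [hb] at h
  have h' : A * (E * A * E⁻¹) * A = E * A * E⁻¹ * A * A := by rw [mul_assoc]; exact h
  exact mul_right_cancel h'

lemma s2 : (E⁻¹ * A * E) * (E * A * E⁻¹) = A ^ 3 := by
  have h := t1
  rw [← t2] at h
  have h5 : A * ((E⁻¹ * A * E) * (E * A * E⁻¹)) * A = A ^ 5 := by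
    rw [← h]; group
  have : (E⁻¹ * A * E) * (E * A * E⁻¹) = A⁻¹ * A ^ 5 * A⁻¹ := by
    rw [← h5]; group
  rw [this]; group

/-- hom from three-generator group to two-generator group -/
def fTG : GenThree → PresentedGroup relsGD
  | GenThree.g1 => G
  | GenThree.g2 => G * D⁻¹ * G * D
  | GenThree.d => D

lemma hTG : ∀ r ∈ relsThree, FreeGroup.lift fTG r = 1 := by
  intro r hr
  simp only [relsThree, Set.mem_insert_iff, Set.mem_singleton_iff] at hr
  rcases hr with rfl | rfl | rfl
  · simp only [map_mul, map_inv, map_pow, map_commutatorElement, FreeGroup.lift_apply_of, fTG]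
    rw [mul_inv_eq_one]
    have h := gd_three
    calc G * D⁻¹ * G * D * D * (G * D⁻¹ * G * D) * D⁻¹
        = G * ((D⁻¹ * G * D) * (D * G * D⁻¹)) * G := by group
      _ = G * G ^ 3 * G := by rw [h]
      _ = G ^ 5 := by group
  · simp only [map_mul, map_inv, map_pow, map_commutatorElement, FreeGroup.lift_apply_of, fTG]
    group
  · simp only [map_mul, map_inv, map_pow, map_commutatorElement, FreeGroup.lift_apply_of, fTG]
    rw [commutatorElement_eq_one_iff_mul_comm]
    have hc := gd_comm
    calc G * (D * (G * D⁻¹ * G * D) * D⁻¹)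
        = G * ((D * G * D⁻¹) * G) := by group
      _ = (G * (D * G * D⁻¹)) * G := by group
      _ = ((D * G * D⁻¹) * G) * G := by rw [← hc]
      _ = (D * (G * D⁻¹ * G * D) * D⁻¹) * G := by group

def fGT : GenGD → PresentedGroup relsThree
  | GenGD.g => A
  | GenGD.d => E

lemma hGT : ∀ r ∈ relsGD, FreeGroup.lift fGT r = 1 := by
  intro r hr
  simp only [relsGD, Set.mem_insert_iff, Set.mem_singleton_iff] at hr
  rcases hr with rfl | rfl
  · simp only [map_mul, map_inv, map_pow, map_commutatorElement, FreeGroup.lift_apply_of, fGT]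
    rw [commutatorElement_eq_one_iff_mul_comm]
    exact s1.symm
  · simp only [map_mul, map_inv, map_pow, FreeGroup.lift_apply_of, fGT]
    rw [mul_inv_eq_one]
    exact s2

def φhom : PresentedGroup relsThree →* PresentedGroup relsGD := PresentedGroup.toGroup hTG
def ψhom : PresentedGroup relsGD →* PresentedGroup relsThree := PresentedGroup.toGroup hGT

lemma comp1 : ψhom.comp φhom = MonoidHom.id _ := by
  ext x
  cases x <;>
    simp only [MonoidHom.comp_apply, MonoidHom.id_apply, φhom, ψhom,
      PresentedGroup.toGroup.of, fTG, fGT, map_mul, map_inv]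
  exact t2

lemma comp2 : φhom.comp ψhom = MonoidHom.id _ := by
  ext x
  cases x <;>
    simp only [MonoidHom.comp_apply, MonoidHom.id_apply, φhom, ψhom,
      PresentedGroup.toGroup.of, fTG, fGT, map_mul, map_inv]

end
end CGM

/-- The group `⟨γ₁, γ₂, δ ∣ γ₂δγ₂δ⁻¹ = γ₁⁵, γ₁δ⁻¹γ₁δ = γ₂, [γ₁, δγ₂δ⁻¹] = 1⟩`
is isomorphic to `⟨γ, δ ∣ [δγδ⁻¹, γ] = 1, (δ⁻¹γδ)(δγδ⁻¹) = γ³⟩`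
via `γ₁ ↦ γ`, `δ ↦ δ`. -/
theorem presentation_closed_graph_manifold :
    ∃ φ : PresentedGroup relsThree ≃* PresentedGroup relsGD,
      φ (PresentedGroup.of GenThree.g1) = PresentedGroup.of GenGD.g ∧
      φ (PresentedGroup.of GenThree.d) = PresentedGroup.of GenGD.d := by
  refine ⟨MonoidHom.toMulEquiv CGM.φhom CGM.ψhom CGM.comp1 CGM.comp2, ?_, ?_⟩ <;>
    simp [MonoidHom.toMulEquiv, CGM.φhom, PresentedGroup.toGroup.of, CGM.fTG]
end

section
/- Let G = ⟨a, b | [a², b²] = 1⟩ and let ξ : G → ℂ* be the character determined by ξ(a) = −1 and ξ(b) = −1. Then dim_ℂ H¹(G; ℂ_ξ) = 1. In particular ξ does not belong to the second characteristic variety Char₂(G) = {characters ξ : dim_ℂ H¹(G; ℂ_ξ) ≥ 2}. -/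
open scoped commutatorElement

open groupCohomology

section OneDim

variable {G : Type} [Group G]

/-- evaluation of a 1-cocycle of `charRep ξ`, valued in `ℂ` -/
noncomputable def ev (ξ : G →* ℂˣ) (f : cocycles₁ (charRep ξ)) (g : G) : ℂ := f g

lemma ev_add (ξ : G →* ℂˣ) (f₁ f₂ : cocycles₁ (charRep ξ)) (g : G) :
    ev ξ (f₁ + f₂) g = ev ξ f₁ g + ev ξ f₂ g := rfl

lemma ev_smul (ξ : G →* ℂˣ) (c : ℂ) (f : cocycles₁ (charRep ξ)) (g : G) :
    ev ξ (c • f) g = c * ev ξ f g := rfl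

lemma ev_cocycle (ξ : G →* ℂˣ) (f : cocycles₁ (charRep ξ)) (g h : G) :
    ev ξ f (g * h) = (ξ g : ℂ) * ev ξ f h + ev ξ f g :=
  (mem_cocycles₁_iff (f : G → charRep ξ)).1 f.2 g h

lemma ev_inv (ξ : G →* ℂˣ) (f : cocycles₁ (charRep ξ)) (g : G) :
    (ξ g : ℂ) * ev ξ f g⁻¹ = - ev ξ f g :=
  cocycles₁_map_inv f g

/-- builds a 1-cocycle of `charRep ξ` from a `ℂ`-valued crossed homomorphism -/
def mkCocycle (ξ : G →* ℂˣ) (f : G → ℂ)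
    (hf : ∀ g h : G, f (g * h) = (ξ g : ℂ) * f h + f g) :
    cocycles₁ (charRep ξ) :=
  ⟨f, (mem_cocycles₁_iff (A := charRep ξ) f).2 hf⟩

lemma ev_mkCocycle (ξ : G →* ℂˣ) (f : G → ℂ) (hf) (g : G) :
    ev ξ (mkCocycle ξ f hf) g = f g := rfl

lemma mem_coboundaries_iff' (ξ : G →* ℂˣ) (f : cocycles₁ (charRep ξ)) :
    (f : G → charRep ξ) ∈ coboundaries₁ (charRep ξ) ↔
      ∃ x : ℂ, ∀ g : G, (ξ g : ℂ) * x - x = ev ξ f g := by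
  constructor
  · rintro ⟨x, hx⟩
    exact ⟨x, fun g => congr_fun hx g⟩
  · rintro ⟨x, hx⟩
    exact ⟨x, funext hx⟩

end OneDim

/-- affine group of `ℂ` -/
@[ext] structure Aff : Type where
  u : ℂˣ
  t : ℂ

namespace Aff

instance : Mul Aff := ⟨fun p q => ⟨p.u * q.u, p.t + (p.u : ℂ) * q.t⟩⟩
instance : One Aff := ⟨⟨1, 0⟩⟩
instance : Inv Aff := ⟨fun p => ⟨p.u⁻¹, -(((p.u⁻¹ : ℂˣ) : ℂ) * p.t)⟩⟩

@[simp] lemma mul_u (p q : Aff) : (p * q).u = p.u * q.u := rfl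
@[simp] lemma mul_t (p q : Aff) : (p * q).t = p.t + (p.u : ℂ) * q.t := rfl
@[simp] lemma one_u : (1 : Aff).u = 1 := rfl
@[simp] lemma one_t : (1 : Aff).t = 0 := rfl
@[simp] lemma inv_u (p : Aff) : (p⁻¹).u = p.u⁻¹ := rfl
@[simp] lemma inv_t (p : Aff) : (p⁻¹).t = -(((p.u⁻¹ : ℂˣ) : ℂ) * p.t) := rfl

instance : Group Aff where
  mul_assoc p q r := by ext
                        · simp [mul_assoc]
                        · simp; ring
  one_mul p := by ext <;> simp
  mul_one p := by ext <;> simp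
  inv_mul_cancel p := by ext <;> simp

/-- first projection as a hom -/
def fstHom : Aff →* ℂˣ where
  toFun := Aff.u
  map_one' := rfl
  map_mul' _ _ := rfl

lemma sq_eq_one {u : ℂˣ} (hu : (u : ℂ) = -1) (x : ℂ) : (⟨u, x⟩ : Aff) ^ 2 = 1 := by
  rw [sq]
  ext
  · show ((u * u : ℂˣ) : ℂ) = ((1 : ℂˣ) : ℂ)
    push_cast [hu]
    ring
  · show x + (u : ℂ) * x = 0
    rw [hu]; ring

end Aff

/-- generator assignment -/
def genAff (ua ub : ℂˣ) (x y : ℂ) : GenTwo → Aff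
  | .a => ⟨ua, x⟩
  | .b => ⟨ub, y⟩

lemma lift_rel_eq_one {ua ub : ℂˣ} (hua : (ua : ℂ) = -1) (hub : (ub : ℂ) = -1)
    (x y : ℂ) : ∀ r ∈ relsTwo, FreeGroup.lift (genAff ua ub x y) r = 1 := by
  intro r hr
  rcases hr with rfl
  rw [map_commutatorElement, map_pow, map_pow, FreeGroup.lift_apply_of, FreeGroup.lift_apply_of]
  show ⁅(⟨ua, x⟩ : Aff) ^ 2, (⟨ub, y⟩ : Aff) ^ 2⁆ = 1
  rw [Aff.sq_eq_one hua x, Aff.sq_eq_one hub y]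
  simp [commutatorElement_def]

/-- existence of a cocycle with prescribed values on the generators -/
lemma exists_cocycle (ξ : PresentedGroup relsTwo →* ℂˣ)
    (ha : (ξ (PresentedGroup.of GenTwo.a) : ℂ) = -1)
    (hb : (ξ (PresentedGroup.of GenTwo.b) : ℂ) = -1) (x y : ℂ) :
    ∃ f : cocycles₁ (charRep ξ),
      ev ξ f (PresentedGroup.of GenTwo.a) = x ∧ ev ξ f (PresentedGroup.of GenTwo.b) = y := by
  set F := PresentedGroup.toGroup (lift_rel_eq_one ha hb x y) with hF
  have hu : Aff.fstHom.comp F = ξ := by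
    apply MonoidHom.eq_of_eqOn_dense (PresentedGroup.closure_range_of relsTwo)
    rintro _ ⟨c, rfl⟩
    cases c <;>
      simp [hF, Aff.fstHom, PresentedGroup.toGroup.of, genAff, MonoidHom.comp_apply]
  have hu' : ∀ g, ((F g).u : ℂ) = (ξ g : ℂ) := fun g => by
    rw [← DFunLike.congr_fun hu g]; rfl
  refine ⟨mkCocycle ξ (fun g => (F g).t) (fun g h => ?_), ?_, ?_⟩
  · simp only [map_mul, Aff.mul_t, hu' g]; ring
  · rw [ev_mkCocycle]
    show (F (PresentedGroup.of GenTwo.a)).t = x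
    rw [PresentedGroup.toGroup.of]
    rfl
  · rw [ev_mkCocycle]
    show (F (PresentedGroup.of GenTwo.b)).t = y
    rw [PresentedGroup.toGroup.of]
    rfl

/-- cocycles agreeing on the generators are equal -/
lemma cocycle_ext (ξ : PresentedGroup relsTwo →* ℂˣ)
    (f₁ f₂ : cocycles₁ (charRep ξ))
    (hA : ev ξ f₁ (PresentedGroup.of GenTwo.a) = ev ξ f₂ (PresentedGroup.of GenTwo.a))
    (hB : ev ξ f₁ (PresentedGroup.of GenTwo.b) = ev ξ f₂ (PresentedGroup.of GenTwo.b)) :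
    f₁ = f₂ := by
  let S : Subgroup (PresentedGroup relsTwo) :=
    { carrier := {g | ev ξ f₁ g = ev ξ f₂ g}
      one_mem' := by
        show ev ξ f₁ 1 = ev ξ f₂ 1
        show ((f₁ : _ → _) 1 : ℂ) = (f₂ : _ → _) 1
        rw [cocycles₁_map_one, cocycles₁_map_one]
      mul_mem' := fun {g h} hg hh => by
        show ev ξ f₁ (g * h) = ev ξ f₂ (g * h)
        rw [ev_cocycle, ev_cocycle, hg, hh]
      inv_mem' := fun {g} hg => by
        show ev ξ f₁ g⁻¹ = ev ξ f₂ g⁻¹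
        have h1 := ev_inv ξ f₁ g
        have h2 := ev_inv ξ f₂ g
        have hne : (ξ g : ℂ) ≠ 0 := Units.ne_zero _
        have : (ξ g : ℂ) * ev ξ f₁ g⁻¹ = (ξ g : ℂ) * ev ξ f₂ g⁻¹ := by
          rw [h1, h2, hg]
        exact mul_left_cancel₀ hne this }
  apply cocycles₁_ext
  intro g
  have hle : Subgroup.closure (Set.range (PresentedGroup.of (rels := relsTwo))) ≤ S :=
    (Subgroup.closure_le S).2 (by rintro _ ⟨c, rfl⟩; cases c <;> assumption)
  exact hle (by rw [PresentedGroup.closure_range_of]; trivial)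

/-- the evaluation functional `f ↦ f a - f b` on cocycles -/
noncomputable def phi (ξ : PresentedGroup relsTwo →* ℂˣ) :
    cocycles₁ (charRep ξ) →ₗ[ℂ] ℂ where
  toFun f := ev ξ f (PresentedGroup.of GenTwo.a) - ev ξ f (PresentedGroup.of GenTwo.b)
  map_add' f g := by simp only [ev_add]; ring
  map_smul' c f := by simp only [ev_smul, RingHom.id_apply, smul_eq_mul]; ring

lemma ker_phi (ξ : PresentedGroup relsTwo →* ℂˣ)
    (ha : (ξ (PresentedGroup.of GenTwo.a) : ℂ) = -1)
    (hb : (ξ (PresentedGroup.of GenTwo.b) : ℂ) = -1) :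
    LinearMap.ker (phi ξ) = LinearMap.ker (H1π (charRep ξ)).hom := by
  ext f
  rw [LinearMap.mem_ker, LinearMap.mem_ker, H1π_eq_zero_iff, mem_coboundaries_iff' ξ f]
  show ev ξ f _ - ev ξ f _ = 0 ↔ _
  constructor
  · intro h0
    have h0' : ev ξ f (PresentedGroup.of GenTwo.a) = ev ξ f (PresentedGroup.of GenTwo.b) :=
      sub_eq_zero.1 h0
    set x : ℂ := -(ev ξ f (PresentedGroup.of GenTwo.a)) / 2 with hx
    set f₂ : cocycles₁ (charRep ξ) :=
      mkCocycle ξ (fun g => (ξ g : ℂ) * x - x) (fun g h => by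
        simp only [map_mul, Units.val_mul]; ring) with hf₂
    have heq : f = f₂ := by
      apply cocycle_ext ξ
      · rw [hf₂, ev_mkCocycle, ha, hx]; ring
      · rw [hf₂, ev_mkCocycle, hb, hx, h0']; ring
    exact ⟨x, fun g => by rw [heq, hf₂, ev_mkCocycle]⟩
  · rintro ⟨x, hxe⟩
    rw [← hxe, ← hxe, ha, hb]
    ring

lemma phi_surjective (ξ : PresentedGroup relsTwo →* ℂˣ)
    (ha : (ξ (PresentedGroup.of GenTwo.a) : ℂ) = -1)
    (hb : (ξ (PresentedGroup.of GenTwo.b) : ℂ) = -1) :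
    Function.Surjective (phi ξ) := by
  obtain ⟨f, hfa, hfb⟩ := exists_cocycle ξ ha hb 1 0
  intro c
  refine ⟨c • f, ?_⟩
  show ev ξ (c • f) _ - ev ξ (c • f) _ = c
  rw [ev_smul, ev_smul, hfa, hfb]; ring

/-- For `G = ⟨a, b ∣ [a², b²] = 1⟩` and the character `ξ` with `ξ(a) = ξ(b) = −1`,
one has `dim_ℂ H¹(G; ℂ_ξ) = 1`; in particular `ξ ∉ Char₂(G)`. -/
theorem char_not_in_second_char_var
    (ξ : PresentedGroup relsTwo →* ℂˣ)
    (ha : (ξ (PresentedGroup.of GenTwo.a) : ℂ) = -1)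
    (hb : (ξ (PresentedGroup.of GenTwo.b) : ℂ) = -1) :
    h1dim ξ = 1 ∧ ¬ 2 ≤ h1dim ξ := by
  have e2 : H1 (charRep ξ) ≃ₗ[ℂ] ℂ :=
    ((H1π (charRep ξ)).hom.quotKerEquivOfSurjective
      ((ModuleCat.epi_iff_surjective _).1 inferInstance)).symm.trans
    ((Submodule.quotEquivOfEq _ _ (ker_phi ξ ha hb).symm).trans
      ((phi ξ).quotKerEquivOfSurjective (phi_surjective ξ ha hb)))
  have hdim : h1dim ξ = 1 := by
    unfold h1dim
    rw [e2.finrank_eq, Module.finrank_self]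
  exact ⟨hdim, by omega⟩
end
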